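/- arXiv:1209.1873 — 2 statements merged into one kernel-verified Lean document; each statement's English description precedes it below -/
import Mathlib

section
/- Per-step inequality for Modified-SGD (key step of Theorem 3): Assume each φ_i is convex and L-Lipschitz and ‖x_i‖ ≤ 1 for all i. Let t ≥ 1, let α_1,…,α_t ∈ ℝ with φ_i*(−α_i) < ∞ for i ≤ t, and set w^(t) = (1/(λt))∑_{i=1}^t α_i x_i. Let α_{t+1} be a maximizer (assumed to exist) of a ↦ −φ_{t+1}*(−a) − (λ(t+1)/2)‖w^(t) + (λ(t+1))^{−1} a x_{t+1}‖². Then (t+1)·D_{t+1}(α_1,…,α_{t+1}) − t·D_t(α_1,…,α_t) ≥ φ_{t+1}(x_{t+1}ᵀ w^(t)) + (λ/2)‖w^(t)‖² − 2L²/((t+1)λ). -/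
open scoped BigOperators RealInnerProductSpace
open Finset

/-- The convex conjugate `φ*(u) = sup_z (z*u - φ z)` (as a real number; junk value
when the supremum is not finite). -/
noncomputable def fconj (φ : ℝ → ℝ) (u : ℝ) : ℝ := ⨆ z : ℝ, (z * u - φ z)

/-- `φ*(u) < ∞`, i.e. the defining supremum of the conjugate is finite. -/
def FiniteConj (φ : ℝ → ℝ) (u : ℝ) : Prop :=
  BddAbove (Set.range fun z => z * u - φ z)

/-- `w^(t) = (1/(λ t)) ∑_{i=1}^t α_i x_i`. -/
noncomputable def wpart {d : ℕ} (lam : ℝ) (x : ℕ → EuclideanSpace ℝ (Fin d))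
    (t : ℕ) (α : ℕ → ℝ) : EuclideanSpace ℝ (Fin d) :=
  (1 / (lam * (t : ℝ))) • ∑ i ∈ Finset.Icc 1 t, α i • x i

/-- The partial dual objective `D_t(α) = (1/t) ∑_{i=1}^t -φ_i*(-α_i) - (λ/2)‖w^(t)‖²`. -/
noncomputable def Dpart {d : ℕ} (lam : ℝ) (x : ℕ → EuclideanSpace ℝ (Fin d))
    (φ : ℕ → ℝ → ℝ) (t : ℕ) (α : ℕ → ℝ) : ℝ :=
  (1 / (t : ℝ)) * ∑ i ∈ Finset.Icc 1 t, -(fconj (φ i) (-(α i)))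
    - lam / 2 * ‖wpart lam x t α‖ ^ 2

lemma lip_nonneg {φ : ℝ → ℝ} {L : ℝ} (hL : ∀ a b : ℝ, |φ a - φ b| ≤ L * |a - b|) :
    0 ≤ L := by
  have h := hL 0 1
  have h0 := abs_nonneg (φ 0 - φ 1)
  simp at h
  linarith

lemma abs_le_of_finiteConj {φ : ℝ → ℝ} {L u : ℝ}
    (hL : ∀ a b : ℝ, |φ a - φ b| ≤ L * |a - b|) (h : FiniteConj φ u) : |u| ≤ L := by
  by_contra hcon
  push_neg at hcon
  obtain ⟨M, hM⟩ := h
  have h1 : ∀ z : ℝ, z * u - φ z ≤ M := fun z => hM ⟨z, rfl⟩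
  have hL0 : 0 ≤ L := lip_nonneg hL
  have hu0 : 0 < |u| := lt_of_le_of_lt hL0 hcon
  have hM0 : 0 ≤ M + φ 0 := by have := h1 0; simp at this; linarith
  have hden : 0 < |u| * (|u| - L) := mul_pos hu0 (by linarith)
  set c := (M + φ 0 + 1) / (|u| * (|u| - L)) with hcdef
  have hcpos : 0 < c := div_pos (by linarith) hden
  have hcc : c * (|u| * (|u| - L)) = M + φ 0 + 1 := div_mul_cancel₀ _ (ne_of_gt hden)
  have h2 : φ (c * u) - φ 0 ≤ L * |c * u - 0| := le_trans (le_abs_self _) (hL (c * u) 0)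
  have h3 : |c * u - 0| = c * |u| := by rw [sub_zero, abs_mul, abs_of_pos hcpos]
  rw [h3] at h2
  have h4 := h1 (c * u)
  have huu : u * u = |u| * |u| := (abs_mul_abs_self u).symm
  nlinarith

lemma exists_subgradient {φ : ℝ → ℝ} (hc : ConvexOn ℝ Set.univ φ) {L : ℝ}
    (hL : ∀ a b : ℝ, |φ a - φ b| ≤ L * |a - b|) (z : ℝ) :
    ∃ u : ℝ, |u| ≤ L ∧ ∀ y, φ z + u * (y - z) ≤ φ y := by
  set g : ℝ → ℝ := fun y => (φ y - φ z) / (y - z) with hg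
  have hmono : ∀ y₁ y₂ : ℝ, y₁ ≠ z → y₂ ≠ z → y₁ ≤ y₂ → g y₁ ≤ g y₂ := fun y₁ y₂ h1 h2 h12 =>
    hc.secant_mono (Set.mem_univ z) (Set.mem_univ y₁) (Set.mem_univ y₂) h1 h2 h12
  have hgabs : ∀ y : ℝ, y ≠ z → |g y| ≤ L := by
    intro y hy
    rw [hg]
    simp only
    rw [abs_div, div_le_iff₀ (abs_pos.mpr (sub_ne_zero.mpr hy))]
    calc |φ y - φ z| ≤ L * |y - z| := hL y z
    _ = L * |y - z| := rfl
  have hne : (g '' Set.Iio z).Nonempty := ⟨g (z - 1), ⟨z - 1, by simp, rfl⟩⟩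
  have hbdd : BddAbove (g '' Set.Iio z) := by
    refine ⟨g (z + 1), ?_⟩
    rintro _ ⟨y, hy, rfl⟩
    exact hmono y (z + 1) (ne_of_lt (Set.mem_Iio.mp hy)) (by linarith) (by
      have := Set.mem_Iio.mp hy; linarith)
  set u := sSup (g '' Set.Iio z) with hu
  have hle : ∀ y : ℝ, z < y → u ≤ g y := by
    intro y hy
    refine csSup_le hne ?_
    rintro _ ⟨y', hy', rfl⟩
    exact hmono y' y (ne_of_lt (Set.mem_Iio.mp hy')) (ne_of_gt hy)
      (by have := Set.mem_Iio.mp hy'; linarith)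
  have hgeu : ∀ y : ℝ, y < z → g y ≤ u := fun y hy => le_csSup hbdd ⟨y, hy, rfl⟩
  refine ⟨u, ?_, ?_⟩
  · rw [abs_le]
    constructor
    · have h1 := hgeu (z - 1) (by linarith)
      have h2 := hgabs (z - 1) (by intro h; linarith [congrArg id h])
      rw [abs_le] at h2
      linarith
    · have h1 := hle (z + 1) (by linarith)
      have h2 := hgabs (z + 1) (by intro h; linarith [congrArg id h])
      rw [abs_le] at h2
      linarith
  · intro y
    rcases lt_trichotomy y z with h | h | h
    · have h1 := hgeu y h
      have hyz : y - z < 0 := by linarith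
      have h2 : u * (y - z) ≤ g y * (y - z) := by
        exact mul_le_mul_of_nonpos_right h1 (le_of_lt hyz)
      have h3 : g y * (y - z) = φ y - φ z := by
        rw [hg]; simp only; rw [div_mul_cancel₀]; exact sub_ne_zero.mpr (by intro hh; exact absurd hh (by rintro rfl; linarith))
      linarith
    · subst h; simp
    · have h1 := hle y h
      have hyz : 0 < y - z := by linarith
      have h2 : u * (y - z) ≤ g y * (y - z) := mul_le_mul_of_nonneg_right h1 (le_of_lt hyz)
      have h3 : g y * (y - z) = φ y - φ z := by
        rw [hg]; simp only; rw [div_mul_cancel₀]; exact sub_ne_zero.mpr (by intro hh; exact absurd hh (by rintro rfl; linarith))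
      linarith

lemma fconj_of_subgrad {φ : ℝ → ℝ} {u z : ℝ} (hsub : ∀ y, φ z + u * (y - z) ≤ φ y) :
    FiniteConj φ u ∧ fconj φ u = z * u - φ z := by
  have hb : ∀ y : ℝ, y * u - φ y ≤ z * u - φ z := by
    intro y
    have := hsub y
    nlinarith [hsub y]
  have hbdd : BddAbove (Set.range fun y : ℝ => y * u - φ y) := by
    refine ⟨z * u - φ z, ?_⟩
    rintro _ ⟨y, rfl⟩
    exact hb y
  refine ⟨hbdd, le_antisymm (ciSup_le hb) (le_ciSup hbdd z)⟩

lemma norm_combo_sq {d : ℕ} (a b : ℝ) (v w : EuclideanSpace ℝ (Fin d)) :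
    ‖a • v + b • w‖ ^ 2 = a ^ 2 * ‖v‖ ^ 2 + 2 * a * b * ⟪v, w⟫ + b ^ 2 * ‖w‖ ^ 2 := by
  rw [norm_add_sq_real, norm_smul, norm_smul, real_inner_smul_left, real_inner_smul_right,
    mul_pow, mul_pow, Real.norm_eq_abs a, Real.norm_eq_abs b, sq_abs, sq_abs]
  ring

set_option maxHeartbeats 1000000 in
/-- Per-step inequality for Modified-SGD (key step of Theorem 3): the greedy
update of the `(t+1)`-st dual variable increases `(t+1) D_{t+1} - t D_t` by at
least `φ_{t+1}(x_{t+1}ᵀ w^(t)) + (λ/2)‖w^(t)‖² - 2L²/((t+1)λ)`. -/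
theorem modified_sgd_step
    (d : ℕ) (x : ℕ → EuclideanSpace ℝ (Fin d))
    (φ : ℕ → ℝ → ℝ) (hconv : ∀ i, ConvexOn ℝ Set.univ (φ i))
    (lam : ℝ) (hlam : 0 < lam)
    (L : ℝ) (hL : ∀ i, ∀ a b : ℝ, |φ i a - φ i b| ≤ L * |a - b|)
    (hx : ∀ i, ‖x i‖ ≤ 1)
    (t : ℕ) (ht : 1 ≤ t)
    (α : ℕ → ℝ) (hfeas : ∀ i ∈ Finset.Icc 1 t, FiniteConj (φ i) (-(α i)))
    (anew : ℝ) (hnew_feas : FiniteConj (φ (t + 1)) (-anew))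
    (hnew_max : ∀ b : ℝ, FiniteConj (φ (t + 1)) (-b) →
      -(fconj (φ (t + 1)) (-b)) - lam * ((t : ℝ) + 1) / 2 *
          ‖wpart lam x t α + (1 / (lam * ((t : ℝ) + 1))) • b • x (t + 1)‖ ^ 2
        ≤ -(fconj (φ (t + 1)) (-anew)) - lam * ((t : ℝ) + 1) / 2 *
          ‖wpart lam x t α + (1 / (lam * ((t : ℝ) + 1))) • anew • x (t + 1)‖ ^ 2) :
    φ (t + 1) ⟪x (t + 1), wpart lam x t α⟫ + lam / 2 * ‖wpart lam x t α‖ ^ 2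
        - 2 * L ^ 2 / (((t : ℝ) + 1) * lam)
      ≤ ((t : ℝ) + 1) * Dpart lam x φ (t + 1) (Function.update α (t + 1) anew)
        - (t : ℝ) * Dpart lam x φ t α := by
  have hL0 : 0 ≤ L := lip_nonneg (hL 0)
  set T : ℝ := (t : ℝ) with hTdef
  have hT1 : (1 : ℝ) ≤ T := by rw [hTdef]; exact_mod_cast ht
  have hT0 : (0 : ℝ) < T := by linarith
  set w : EuclideanSpace ℝ (Fin d) := wpart lam x t α with hwdef
  set X : EuclideanSpace ℝ (Fin d) := x (t + 1) with hXdef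
  set c : ℝ := 1 / (lam * (T + 1)) with hcdef
  have hc0 : 0 < c := by rw [hcdef]; positivity
  set zz : ℝ := ⟪X, w⟫ with hzzdef
  -- subgradient
  obtain ⟨u, huL, hsub⟩ := exists_subgradient (hconv (t + 1)) (hL (t + 1)) zz
  obtain ⟨hfin_u, hfconj_u⟩ := fconj_of_subgrad hsub
  -- norm expansions
  have en : ∀ s : ℝ, ‖w + c • s • X‖ ^ 2
      = ‖w‖ ^ 2 + 2 * (c * s) * zz + (c * s) ^ 2 * ‖X‖ ^ 2 := by
    intro s
    have e1 : w + c • s • X = (1 : ℝ) • w + (c * s) • X := by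
      rw [one_smul, smul_smul]
    rw [e1, norm_combo_sq, hzzdef, real_inner_comm X w]
    ring
  have hexp : ∀ s : ℝ, lam * (T + 1) / 2 *
        (‖w‖ ^ 2 + 2 * (c * s) * zz + (c * s) ^ 2 * ‖X‖ ^ 2)
      = lam * (T + 1) / 2 * ‖w‖ ^ 2 + s * zz + c / 2 * s ^ 2 * ‖X‖ ^ 2 := by
    intro s
    rw [hcdef]
    have h1 : lam * (T + 1) ≠ 0 := by positivity
    field_simp
  -- apply maximality at b = -u
  have hmax := hnew_max (-u) (by rwa [neg_neg])
  rw [neg_neg, hfconj_u] at hmax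
  rw [en (-u), en anew, hexp (-u), hexp anew] at hmax
  set F : ℝ := -(fconj (φ (t + 1)) (-anew)) with hFdef
  have hkey : φ (t + 1) zz + anew * zz + c / 2 * anew ^ 2 * ‖X‖ ^ 2
      - c / 2 * u ^ 2 * ‖X‖ ^ 2 ≤ F := by nlinarith [hmax]
  -- bounds
  have haL : |anew| ≤ L := by
    have := abs_le_of_finiteConj (hL (t + 1)) hnew_feas
    rwa [abs_neg] at this
  have hαL : ∀ i ∈ Finset.Icc 1 t, |α i| ≤ L := by
    intro i hi
    have := abs_le_of_finiteConj (hL i) (hfeas i hi)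
    rwa [abs_neg] at this
  have hSn : ‖∑ i ∈ Finset.Icc 1 t, α i • x i‖ ≤ T * L := by
    calc ‖∑ i ∈ Finset.Icc 1 t, α i • x i‖ ≤ ∑ i ∈ Finset.Icc 1 t, ‖α i • x i‖ :=
          norm_sum_le _ _
    _ ≤ ∑ _i ∈ Finset.Icc 1 t, L := by
        refine Finset.sum_le_sum ?_
        intro i hi
        rw [norm_smul, Real.norm_eq_abs]
        calc |α i| * ‖x i‖ ≤ L * 1 :=
              mul_le_mul (hαL i hi) (hx i) (norm_nonneg _) hL0
        _ = L := mul_one L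
    _ = T * L := by rw [Finset.sum_const, Nat.card_Icc]; simp [hTdef]
  have hwn : lam * ‖w‖ ≤ L := by
    have e1 : ‖w‖ = (1 / (lam * T)) * ‖∑ i ∈ Finset.Icc 1 t, α i • x i‖ := by
      rw [hwdef, wpart, norm_smul, Real.norm_eq_abs, abs_of_pos (by positivity)]
    rw [e1]
    have h2 : lam * (1 / (lam * T)) = 1 / T := by field_simp
    calc lam * (1 / (lam * T) * ‖∑ i ∈ Finset.Icc 1 t, α i • x i‖)
        = (1 / T) * ‖∑ i ∈ Finset.Icc 1 t, α i • x i‖ := by rw [← mul_assoc, h2]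
    _ ≤ (1 / T) * (T * L) := by
        apply mul_le_mul_of_nonneg_left hSn (by positivity)
    _ = L := by field_simp
  have hzzn : lam * |zz| ≤ L := by
    have h1 : |zz| ≤ ‖X‖ * ‖w‖ := abs_real_inner_le_norm X w
    have h2 : ‖X‖ * ‖w‖ ≤ 1 * ‖w‖ :=
      mul_le_mul_of_nonneg_right (hx (t + 1)) (norm_nonneg _)
    nlinarith [norm_nonneg w]
  -- scalar facts
  have f1 : lam ^ 2 * ‖w‖ ^ 2 ≤ L ^ 2 := by
    have h := mul_le_mul hwn hwn (by positivity) hL0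
    calc lam ^ 2 * ‖w‖ ^ 2 = (lam * ‖w‖) * (lam * ‖w‖) := by ring
    _ ≤ L * L := h
    _ = L ^ 2 := (sq L).symm
  have f2 : -(L ^ 2) ≤ lam * (anew * zz) := by
    have h1 : |anew * (lam * zz)| ≤ L * L := by
      rw [abs_mul, abs_mul, abs_of_pos hlam]
      exact mul_le_mul haL hzzn (by positivity) hL0
    have h2 := neg_abs_le (anew * (lam * zz))
    nlinarith
  have f3 : u ^ 2 * ‖X‖ ^ 2 ≤ L ^ 2 := by
    have h1 : u ^ 2 ≤ L ^ 2 := by nlinarith [abs_le.mp huL, abs_nonneg u]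
    have h2 : ‖X‖ ^ 2 ≤ 1 := by nlinarith [hx (t + 1), norm_nonneg X]
    nlinarith [sq_nonneg u, sq_nonneg ‖X‖]
  -- new w
  set α' : ℕ → ℝ := Function.update α (t + 1) anew with hα'def
  have hicc : Finset.Icc 1 (t + 1) = insert (t + 1) (Finset.Icc 1 t) := by
    ext i; simp [Finset.mem_Icc]; omega
  have hnotmem : (t + 1) ∉ Finset.Icc 1 t := by simp
  have hupd : ∀ i ∈ Finset.Icc 1 t, α' i = α i := by
    intro i hi
    have : i ≠ t + 1 := by simp [Finset.mem_Icc] at hi; omega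
    exact Function.update_of_ne this _ _
  have hS : ∑ i ∈ Finset.Icc 1 t, α i • x i = (lam * T) • w := by
    rw [hwdef, wpart, smul_smul]
    rw [mul_one_div, div_self (by positivity : lam * T ≠ 0), one_smul]
  have hw' : wpart lam x (t + 1) α' = (c * (lam * T)) • w + (c * anew) • X := by
    rw [wpart, hicc, Finset.sum_insert hnotmem]
    rw [Finset.sum_congr rfl (fun i hi => by rw [hupd i hi])]
    rw [hS, hα'def, Function.update_self]
    push_cast
    rw [← hTdef, ← hcdef, smul_add, smul_smul, smul_smul, ← hXdef, add_comm]
  have ew' : ‖wpart lam x (t + 1) α'‖ ^ 2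
      = (c * (lam * T)) ^ 2 * ‖w‖ ^ 2 + 2 * (c * (lam * T)) * (c * anew) * zz
        + (c * anew) ^ 2 * ‖X‖ ^ 2 := by
    rw [hw', norm_combo_sq, hzzdef, real_inner_comm X w]
  have hG : lam * (T + 1) / 2 * ‖wpart lam x (t + 1) α'‖ ^ 2
      = lam ^ 2 * T ^ 2 * c * ‖w‖ ^ 2 / 2 + lam * T * c * (anew * zz)
        + c / 2 * anew ^ 2 * ‖X‖ ^ 2 := by
    rw [ew', hcdef]
    have h1 : lam * (T + 1) ≠ 0 := by positivity
    field_simp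
  -- Dpart computations
  have hSig : ∑ i ∈ Finset.Icc 1 (t + 1), -(fconj (φ i) (-(α' i)))
      = (∑ i ∈ Finset.Icc 1 t, -(fconj (φ i) (-(α i)))) + F := by
    rw [hicc, Finset.sum_insert hnotmem]
    rw [Finset.sum_congr rfl (fun i hi => by rw [hupd i hi])]
    have hup2 : α' (t + 1) = anew := by rw [hα'def]; exact Function.update_self _ _ _
    rw [hup2, ← hFdef]
    ring
  have hD1 : (T + 1) * Dpart lam x φ (t + 1) α'
      = ((∑ i ∈ Finset.Icc 1 t, -(fconj (φ i) (-(α i)))) + F)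
        - lam * (T + 1) / 2 * ‖wpart lam x (t + 1) α'‖ ^ 2 := by
    rw [Dpart, hSig]
    push_cast
    rw [← hTdef]
    have h1 : (T + 1) ≠ 0 := by positivity
    field_simp
  have hD0 : T * Dpart lam x φ t α
      = (∑ i ∈ Finset.Icc 1 t, -(fconj (φ i) (-(α i)))) - lam * T / 2 * ‖w‖ ^ 2 := by
    rw [Dpart, ← hTdef, ← hwdef]
    field_simp
  -- finish
  rw [hD1, hD0]
  have hLc : 2 * L ^ 2 / ((T + 1) * lam) = 2 * L ^ 2 * c := by
    rw [hcdef, mul_one_div, mul_comm lam (T + 1)]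
  rw [hLc]
  -- key identity using lam * (T+1) * c = 1
  have hid : (lam / 2 * ‖w‖ ^ 2 - 2 * L ^ 2 * c + lam * T * c * (anew * zz)
        + c / 2 * u ^ 2 * ‖X‖ ^ 2 + lam ^ 2 * T ^ 2 * c * ‖w‖ ^ 2 / 2)
        - (anew * zz + lam * T / 2 * ‖w‖ ^ 2)
      = c * (lam ^ 2 * ‖w‖ ^ 2 / 2 - 2 * L ^ 2 - lam * (anew * zz)
        + u ^ 2 * ‖X‖ ^ 2 / 2) := by
    rw [hcdef]
    have h1 : lam * (T + 1) ≠ 0 := by positivity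
    field_simp
    ring
  have hbr : lam ^ 2 * ‖w‖ ^ 2 / 2 - 2 * L ^ 2 - lam * (anew * zz)
      + u ^ 2 * ‖X‖ ^ 2 / 2 ≤ 0 := by linarith
  have hbr' : c * (lam ^ 2 * ‖w‖ ^ 2 / 2 - 2 * L ^ 2 - lam * (anew * zz)
      + u ^ 2 * ‖X‖ ^ 2 / 2) ≤ 0 := mul_nonpos_of_nonneg_of_nonpos hc0.le hbr
  linarith [hkey, hG, hid, hbr']
end

section
/- Refined strong convexity parameter for the hinge loss: Let y ∈ {−1, +1} and φ(u) = max(0, 1 − yu), whose convex conjugate satisfies φ*(−a) = −ay when ay ∈ [0,1] and φ*(−a) = +∞ otherwise. Then for all a, b ∈ ℝ with ay ∈ [0,1] and by ∈ [0,1], and every u ∈ ℝ with −b ∈ ∂φ(u): φ*(−a) − φ*(−b) + u(a − b) = |uy − 1|·|a − b| ≥ |uy − 1|·(a − b)². -/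
open scoped BigOperators RealInnerProductSpace
open Finset

/-- `g ∈ ∂φ(a)`: `g` is a subgradient of `φ` at `a`. -/
def IsSubgrad (φ : ℝ → ℝ) (a g : ℝ) : Prop :=
  ∀ b, φ a + g * (b - a) ≤ φ b

/-- `u ∈ ∂φ*(b)`: `u` is a subgradient of the conjugate `φ*` at `b`
(the subgradient inequality being required at all points where `φ*` is finite). -/
def ConjSubgrad (φ : ℝ → ℝ) (b u : ℝ) : Prop :=
  FiniteConj φ b ∧ ∀ v, FiniteConj φ v → fconj φ b + u * (v - b) ≤ fconj φ v

/-- Dual feasibility: `φ_i*(-α_i) < ∞` for all `i`. -/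
def Feas {n : ℕ} (φ : Fin n → ℝ → ℝ) (α : Fin n → ℝ) : Prop :=
  ∀ i, FiniteConj (φ i) (-(α i))

/-- `w(α) = (1/(λ n)) ∑ι α_i x_i`. -/
noncomputable def wvec {n d : ℕ} (lam : ℝ) (x : Fin n → EuclideanSpace ℝ (Fin d))
    (α : Fin n → ℝ) : EuclideanSpace ℝ (Fin d) :=
  (1 / (lam * (n : ℝ))) • ∑ i, α i • x i

/-- The primal objective `P(w)`. -/
noncomputable def primalObj {n d : ℕ} (lam : ℝ) (x : Fin n → EuclideanSpace ℝ (Fin d))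
    (φ : Fin n → ℝ → ℝ) (w : EuclideanSpace ℝ (Fin d)) : ℝ :=
  (1 / (n : ℝ)) * ∑ i, φ i ⟪x i, w⟫ + lam / 2 * ‖w‖ ^ 2

/-- The dual objective `D(α)`. -/
noncomputable def dualObj {n d : ℕ} (lam : ℝ) (x : Fin n → EuclideanSpace ℝ (Fin d))
    (φ : Fin n → ℝ → ℝ) (α : Fin n → ℝ) : ℝ :=
  (1 / (n : ℝ)) * ∑ i, -(fconj (φ i) (-(α i))) - lam / 2 * ‖wvec lam x α‖ ^ 2

/-- The SDCA trajectory: `α^(0) = α0`, `α^(t+1) = step α^(t) (idx t)`. -/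
noncomputable def traj {n : ℕ} (step : (Fin n → ℝ) → Fin n → (Fin n → ℝ))
    (α0 : Fin n → ℝ) (idx : ℕ → Fin n) : ℕ → (Fin n → ℝ)
  | 0 => α0
  | t + 1 => step (traj step α0 idx t) (idx t)

/-- Expectation over the first `t` coordinates of a uniformly random i.i.d. index
sequence, applied to a function `g` of the index sequence (which should depend
only on the first `t` indices). -/
noncomputable def ExpIdx {n : ℕ} (hn : 0 < n) (t : ℕ) (g : (ℕ → Fin n) → ℝ) : ℝ :=
  (∑ idx : Fin t → Fin n,
      g (fun k => if h : k < t then idx ⟨k, h⟩ else (⟨0, hn⟩ : Fin n))) / (n : ℝ) ^ t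

/-- Refined strong convexity parameter for the hinge loss
`φ(u) = max(0, 1 - yu)` with `y ∈ {±1}`: for dual-feasible `a, b` and any
`u` with `-b ∈ ∂φ(u)`,
`φ*(-a) - φ*(-b) + u(a-b) = |uy - 1| |a-b| ≥ |uy - 1| (a-b)²`. -/
theorem hinge_refined_strong_convexity
    (y : ℝ) (hy : y = 1 ∨ y = -1)
    (φ : ℝ → ℝ) (hφ : φ = fun u => max 0 (1 - y * u))
    (hconj : ∀ a : ℝ, a * y ∈ Set.Icc (0 : ℝ) 1 → fconj φ (-a) = -(a * y))
    (a b u : ℝ)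
    (ha : a * y ∈ Set.Icc (0 : ℝ) 1) (hb : b * y ∈ Set.Icc (0 : ℝ) 1)
    (hu : IsSubgrad φ u (-b)) :
    fconj φ (-a) - fconj φ (-b) + u * (a - b) = |u * y - 1| * |a - b|
    ∧ |u * y - 1| * (a - b) ^ 2 ≤ |u * y - 1| * |a - b| := by

  obtain ⟨ha0, ha1⟩ := ha
  obtain ⟨hb0, hb1⟩ := hb
  have hyy : y * y = 1 := by rcases hy with h | h <;> subst h <;> norm_num
  have habs_y : |y| = 1 := by rcases hy with h | h <;> subst h <;> norm_num
  rw [hconj a ⟨ha0, ha1⟩, hconj b ⟨hb0, hb1⟩, hφ] at *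
  -- determine b*y according to the position of u*y relative to 1
  have hgt : 1 < u * y → b * y = 0 := by
    intro h
    have A := hu (u + y * ((u * y - 1) / 2))
    have B := hu (u - y * ((u * y - 1) / 2))
    simp only at A B
    have e0 : max 0 (1 - y * u) = 0 := by
      apply max_eq_left; nlinarith
    have e1 : max 0 (1 - y * (u + y * ((u * y - 1) / 2))) = 0 := by
      apply max_eq_left; nlinarith
    have e2 : max 0 (1 - y * (u - y * ((u * y - 1) / 2))) = 0 := by
      apply max_eq_left; nlinarith
    rw [e0, e1] at A
    rw [e0, e2] at B
    nlinarith
  have hlt : u * y < 1 → b * y = 1 := by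
    intro h
    have A := hu (u + y * ((1 - u * y) / 2))
    have B := hu (u - y * ((1 - u * y) / 2))
    simp only at A B
    have e0 : max 0 (1 - y * u) = 1 - y * u := by
      apply max_eq_right; nlinarith
    have e1 : max 0 (1 - y * (u + y * ((1 - u * y) / 2)))
        = 1 - y * (u + y * ((1 - u * y) / 2)) := by
      apply max_eq_right; nlinarith
    have e2 : max 0 (1 - y * (u - y * ((1 - u * y) / 2)))
        = 1 - y * (u - y * ((1 - u * y) / 2)) := by
      apply max_eq_right; nlinarith
    rw [e0, e1] at A
    rw [e0, e2] at B
    nlinarith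
  have hLHS : -(a * y) - -(b * y) + u * (a - b) = (u * y - 1) * (y * (a - b)) := by
    linear_combination (-(u * (a - b))) * hyy
  have hnn : 0 ≤ (u * y - 1) * (y * (a - b)) := by
    rcases lt_trichotomy (u * y) 1 with h | h | h
    · have hb1' := hlt h
      have : y * (a - b) = a * y - 1 := by linear_combination -hb1'
      rw [this]
      nlinarith
    · have : u * y - 1 = 0 := by linarith
      rw [this]; ring_nf; simp
    · have hb0' := hgt h
      have : y * (a - b) = a * y := by linear_combination -hb0'
      rw [this]
      nlinarith
  have habs : |u * y - 1| * |a - b| = (u * y - 1) * (y * (a - b)) := by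
    have : |u * y - 1| * |a - b| = |(u * y - 1) * (y * (a - b))| := by
      rw [abs_mul, abs_mul, habs_y]
      ring
    rw [this, abs_of_nonneg hnn]
  constructor
  · rw [habs]; linarith [hLHS]
  · have hab1 : |a - b| ≤ 1 := by
      have : |a - b| = |a * y - b * y| := by
        rw [show a * y - b * y = (a - b) * y by ring, abs_mul, habs_y, mul_one]
      rw [this]
      rw [abs_le]
      constructor <;> linarith
    have h2 : (a - b) ^ 2 ≤ |a - b| := by
      have := abs_nonneg (a - b)
      nlinarith [sq_abs (a - b)]
    exact mul_le_mul_of_nonneg_left h2 (abs_nonneg _)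
end
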